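/- Let m ≥ 3 and H be an m×m irreducible real symmetric matrix with strongly cospectral indices u,v. Then it is impossible that both eᵤ + eᵥ and eᵤ − eᵥ are eigenvectors of H; equivalently, |σ⁺ᵤᵥ(H)| and |σ⁻ᵤᵥ(H)| cannot both equal 1. -/
import Mathlib


open Matrix

theorem stmt11 {m r : ℕ} (hm : 3 ≤ m) (H : Matrix (Fin m) (Fin m) ℝ)
    (lam : Fin r → ℝ) (E : Fin r → Matrix (Fin m) (Fin m) ℝ)
    (hH : H.IsSymm)
    (hlam : Function.Injective lam)
    (hEsymm : ∀ j, (E j).IsSymm)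
    (hEidem : ∀ j, E j * E j = E j)
    (hEorth : ∀ j k, j ≠ k → E j * E k = 0)
    (hEsum : ∑ j, E j = 1)
    (hEnz : ∀ j, E j ≠ 0)
    (hspec : H = ∑ j, lam j • E j)
    (hirr : ∀ S : Set (Fin m), (∀ i ∈ S, ∀ j, j ∉ S → H i j = 0) → S = ∅ ∨ S = Set.univ)
    (u v : Fin m) (huv : u ≠ v)
    (hsc : ∀ j, (E j) *ᵥ (Pi.single u 1 : Fin m → ℝ) = (E j) *ᵥ (Pi.single v 1 : Fin m → ℝ) ∨
      (E j) *ᵥ (Pi.single u 1 : Fin m → ℝ) = -((E j) *ᵥ (Pi.single v 1 : Fin m → ℝ))) :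
    ¬ ((∃ θ : ℝ, H *ᵥ ((Pi.single u 1 : Fin m → ℝ) + Pi.single v 1) =
          θ • ((Pi.single u 1 : Fin m → ℝ) + Pi.single v 1)) ∧
       (∃ θ : ℝ, H *ᵥ ((Pi.single u 1 : Fin m → ℝ) - Pi.single v 1) =
          θ • ((Pi.single u 1 : Fin m → ℝ) - Pi.single v 1))) := by
  rintro ⟨⟨θ₁, h1⟩, ⟨θ₂, h2⟩⟩
  have key : ∀ j : Fin m, j ≠ u → j ≠ v → H j u = 0 ∧ H j v = 0 := by
    intro j hju hjv
    have e1 := congrFun h1 j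
    have e2 := congrFun h2 j
    simp [mulVec_add, mulVec_sub, mulVec_single, Pi.single_apply, hju, hjv] at e1 e2
    constructor <;> linarith
  have hS := hirr {u, v} ?_
  · rcases hS with h | h
    · have hu : u ∈ ({u, v} : Set (Fin m)) := by simp
      rw [h] at hu
      exact hu
    · have hall : ∀ w : Fin m, w = u ∨ w = v := by
        intro w
        have : w ∈ ({u, v} : Set (Fin m)) := h ▸ Set.mem_univ w
        simpa using this
      have hsub : (Finset.univ : Finset (Fin m)) ⊆ {u, v} := by
        intro w _
        rcases hall w with rfl | rfl <;> simp
      have hcard := Finset.card_le_card hsub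
      have h2 : ({u, v} : Finset (Fin m)).card ≤ 2 := Finset.card_insert_le _ _ |>.trans (by simp)
      simp [Finset.card_univ] at hcard
      omega
  · intro i hi j hj
    simp only [Set.mem_insert_iff, Set.mem_singleton_iff] at hi hj
    push_neg at hj
    have hk := key j hj.1 hj.2
    have hsymm : H i j = H j i := by
      have := congrFun (congrFun hH.eq j) i
      simpa [Matrix.transpose_apply] using this
    rcases hi with rfl | rfl
    · rw [hsymm]; exact hk.1
    · rw [hsymm]; exact hk.2
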